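/- Let D : [0,∞) → [0,∞) be non-decreasing and right-continuous with critical bid b* for target I > 0 (D(b*) ≥ I, D(b) < I for b < b*), and suppose D(b*) > I and D⁻(b*) > 0. Then no pure strategy (single bid value with a single weight γ ≤ 1) can achieve the lower bound I·b* − ∫₀^{b*} D(u) du if D is discontinuous at b*, i.e., the cost of every feasible pure strategy strictly exceeds I·b* − ∫₀^{b*} D(u) du, while mixed two-bid strategies achieve costs arbitrarily close to it. -/

import Mathlib

open MeasureTheory Topology

/-- If the supply curve `D` is discontinuous at its critical bid `b* > 0`
for target `I` (i.e. `D⁻(b*) < D b*`, with `D b* > I` and `D⁻(b*) > 0`), then every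
feasible pure strategy costs strictly more than the lower bound `I·b* − ∫₀^{b*} D`, while
two-bid mixed strategies achieve costs arbitrarily close to it. -/
theorem stmt17 (D : ℝ → ℝ) (hmono : Monotone D)
    (hrc : ∀ a : ℝ, ContinuousWithinAt D (Set.Ici a) a)
    (hnn : ∀ b, 0 ≤ D b) (I : ℝ) (hI : 0 < I)
    (bstar : ℝ) (hbstarpos : 0 < bstar)
    (hDbstar : I < D bstar)
    (hcrit : ∀ b, 0 ≤ b → b < bstar → D b < I)
    (Dminus : ℝ) (hDminus : Filter.Tendsto D (𝓝[<] bstar) (𝓝 Dminus))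
    (hDminuspos : 0 < Dminus) (hdisc : Dminus < D bstar) :
    (∀ γ bid : ℝ, 0 ≤ bid → 0 ≤ γ → γ ≤ 1 → I ≤ γ * D bid →
      I * bstar - (∫ u in (0:ℝ)..bstar, D u) <
        γ * (D bid * bid - ∫ u in (0:ℝ)..bid, D u)) ∧
    (∀ ε : ℝ, 0 < ε → ∃ b₁ b₂ γ₁ γ₂ : ℝ,
      0 ≤ b₁ ∧ 0 ≤ b₂ ∧ 0 ≤ γ₁ ∧ 0 ≤ γ₂ ∧ γ₁ + γ₂ ≤ 1 ∧
      I ≤ γ₁ * D b₁ + γ₂ * D b₂ ∧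
      γ₁ * (D b₁ * b₁ - ∫ u in (0:ℝ)..b₁, D u) +
          γ₂ * (D b₂ * b₂ - ∫ u in (0:ℝ)..b₂, D u) <
        (I * bstar - (∫ u in (0:ℝ)..bstar, D u)) + ε) := by
  have hint : ∀ a b : ℝ, IntervalIntegrable D volume a b := fun a b =>
    hmono.intervalIntegrable
  set A : ℝ := ∫ u in (0:ℝ)..bstar, D u with hA
  -- upper bound for integrals against a monotone function
  have hub : ∀ a b : ℝ, a ≤ b → (∫ u in a..b, D u) ≤ (b - a) * D b := by
    intro a b hab
    have := intervalIntegral.integral_mono_on hab (hint a b)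
      (intervalIntegrable_const (c := D b)) (fun u hu => hmono hu.2)
    simpa using this
  have hlb : ∀ a b : ℝ, a ≤ b → (b - a) * D a ≤ (∫ u in a..b, D u) := by
    intro a b hab
    have := intervalIntegral.integral_mono_on hab
      (intervalIntegrable_const (c := D a)) (hint a b) (fun u hu => hmono hu.1)
    simpa using this
  -- positivity of A
  have hApos : 0 < A := by
    obtain ⟨c, hc1, hc2⟩ : ∃ c, c ∈ Set.Ioo (max 0 (bstar / 2)) bstar ∧ Dminus / 2 < D c := by
      have h1 : ∀ᶠ c in 𝓝[<] bstar, Dminus / 2 < D c :=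
        hDminus.eventually_const_lt (by linarith)
      have h2 : ∀ᶠ c in 𝓝[<] bstar, c ∈ Set.Ioo (max 0 (bstar / 2)) bstar :=
        Ioo_mem_nhdsLT_of_mem ⟨max_lt hbstarpos (by linarith), le_refl bstar⟩
      exact ((h2.and h1).exists)
    obtain ⟨hc0, hcb⟩ := hc1
    have hc0' : 0 < c := lt_of_le_of_lt (le_max_left _ _) hc0
    have hsplit : A = (∫ u in (0:ℝ)..c, D u) + ∫ u in c..bstar, D u := by
      rw [hA, intervalIntegral.integral_add_adjacent_intervals (hint 0 c) (hint c bstar)]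
    have h1 : 0 ≤ ∫ u in (0:ℝ)..c, D u := by
      have := hlb 0 c hc0'.le
      have h0 : 0 ≤ (c - 0) * D 0 := mul_nonneg (by linarith) (hnn 0)
      linarith
    have h2 : (bstar - c) * D c ≤ ∫ u in c..bstar, D u := hlb c bstar hcb.le
    have h3 : 0 < (bstar - c) * D c := by
      apply mul_pos (by linarith)
      linarith
    linarith
  constructor
  · -- Part 1: pure strategies
    intro γ bid hbid hγ0 hγ1 hfeas
    have hbge : bstar ≤ bid := by
      by_contra h
      push_neg at h
      have := hcrit bid hbid h
      nlinarith [hnn bid]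
    have hDbid : D bstar ≤ D bid := hmono hbge
    have hDbidpos : 0 < D bid := by linarith
    set k : ℝ := I / D bid with hk
    have hkpos : 0 < k := div_pos hI hDbidpos
    have hklt : k < 1 := (div_lt_one hDbidpos).2 (by linarith)
    have hkD : k * D bid = I := div_mul_cancel₀ I hDbidpos.ne'
    have hγk : k ≤ γ := by
      rw [hk, div_le_iff₀ hDbidpos]
      exact hfeas
    -- S ≥ 0
    have hS : 0 ≤ D bid * bid - ∫ u in (0:ℝ)..bid, D u := by
      have := hub 0 bid hbid
      simpa using by linarith [hub 0 bid hbid]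
    have hsplit : (∫ u in (0:ℝ)..bid, D u) = A + ∫ u in bstar..bid, D u := by
      rw [hA, intervalIntegral.integral_add_adjacent_intervals (hint 0 bstar) (hint bstar bid)]
    have htail : (∫ u in bstar..bid, D u) ≤ (bid - bstar) * D bid := hub bstar bid hbge
    have step1 : k * (D bid * bid - ∫ u in (0:ℝ)..bid, D u) ≤
        γ * (D bid * bid - ∫ u in (0:ℝ)..bid, D u) := mul_le_mul_of_nonneg_right hγk hS
    have step2 : I * bstar - k * A ≤ k * (D bid * bid - ∫ u in (0:ℝ)..bid, D u) := by
      rw [hsplit]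
      nlinarith [htail, hkD, hkpos]
    have step3 : I * bstar - A < I * bstar - k * A := by nlinarith
    linarith
  · -- Part 2: mixed strategies
    intro ε hε
    set Db := D bstar with hDb
    set F : ℝ → ℝ := fun c => ∫ u in (0:ℝ)..c, D u with hF
    -- tendsto of primitive
    have hFt : Filter.Tendsto F (𝓝[<] bstar) (𝓝 A) := by
      have hcont : ContinuousOn F (Set.uIcc (0:ℝ) bstar) :=
        intervalIntegral.continuousOn_primitive_interval' (hint 0 bstar) Set.left_mem_uIcc
      have h1 : Set.uIcc (0:ℝ) bstar = Set.Icc 0 bstar := Set.uIcc_of_le hbstarpos.le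
      have h2 : Filter.Tendsto F (𝓝[Set.Icc (0:ℝ) bstar] bstar) (𝓝 A) := by
        have := (hcont bstar (by rw [h1]; exact Set.right_mem_Icc.2 hbstarpos.le))
        rw [h1] at this
        exact this
      have h3 : 𝓝[<] bstar = 𝓝[Set.Ioo (0:ℝ) bstar] bstar :=
        (nhdsWithin_Ioo_eq_nhdsLT hbstarpos).symm
      rw [h3]
      exact h2.mono_left (nhdsWithin_mono _ Set.Ioo_subset_Icc_self)
    have hDm_le : Dminus ≤ I := by
      have : ∀ᶠ c in 𝓝[<] bstar, D c ≤ I := by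
        filter_upwards [Ioo_mem_nhdsLT_of_mem
          (⟨max_lt hbstarpos (by linarith), le_refl bstar⟩ :
            bstar ∈ Set.Ioc (max 0 (bstar/2)) bstar)] with c hc
        exact (hcrit c (le_trans (le_max_left _ _) hc.1.le) hc.2).le
      exact le_of_tendsto hDminus this
    have hΔ : (0:ℝ) < Db - Dminus := by linarith
    -- the cost function for the mixed strategy parametrized by the lower bid c
    set g : ℝ → ℝ := fun c =>
      ((I - D c) / (Db - D c)) * (Db * bstar - A) +
        ((Db - I) / (Db - D c)) * (D c * c - F c) with hg
    have hL : Filter.Tendsto g (𝓝[<] bstar)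
        (𝓝 (((I - Dminus) / (Db - Dminus)) * (Db * bstar - A) +
          ((Db - I) / (Db - Dminus)) * (Dminus * bstar - A))) := by
      have hid : Filter.Tendsto (fun c : ℝ => c) (𝓝[<] bstar) (𝓝 bstar) :=
        (continuous_id.tendsto bstar).mono_left nhdsWithin_le_nhds
      have h1 : Filter.Tendsto (fun c => Db - D c) (𝓝[<] bstar) (𝓝 (Db - Dminus)) :=
        tendsto_const_nhds.sub hDminus
      have h2 : Filter.Tendsto (fun c => (I - D c) / (Db - D c)) (𝓝[<] bstar)
          (𝓝 ((I - Dminus) / (Db - Dminus))) :=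
        (tendsto_const_nhds.sub hDminus).div h1 hΔ.ne'
      have h3 : Filter.Tendsto (fun c => (Db - I) / (Db - D c)) (𝓝[<] bstar)
          (𝓝 ((Db - I) / (Db - Dminus))) :=
        tendsto_const_nhds.div h1 hΔ.ne'
      exact (h2.mul tendsto_const_nhds).add (h3.mul ((hDminus.mul hid).sub hFt))
    have hLval : ((I - Dminus) / (Db - Dminus)) * (Db * bstar - A) +
        ((Db - I) / (Db - Dminus)) * (Dminus * bstar - A) = I * bstar - A := by
      field_simp
      ring
    rw [hLval] at hL
    have hev : ∀ᶠ c in 𝓝[<] bstar, g c < I * bstar - A + ε :=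
      hL.eventually_lt_const (by linarith)
    have hmem : ∀ᶠ c in 𝓝[<] bstar, c ∈ Set.Ioo (max 0 (bstar/2)) bstar :=
      Ioo_mem_nhdsLT_of_mem ⟨max_lt hbstarpos (by linarith), le_refl bstar⟩
    obtain ⟨c, hgc, hcmem⟩ := (hev.and hmem).exists
    have hc0 : 0 < c := lt_of_le_of_lt (le_max_left _ _) hcmem.1
    have hcb : c < bstar := hcmem.2
    have hDc : D c < I := hcrit c hc0.le hcb
    have hden : (0:ℝ) < Db - D c := by linarith
    refine ⟨bstar, c, (I - D c) / (Db - D c), (Db - I) / (Db - D c),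
      hbstarpos.le, hc0.le, ?_, ?_, ?_, ?_, ?_⟩
    · exact div_nonneg (by linarith) hden.le
    · exact div_nonneg (by linarith) hden.le
    · have : (I - D c) / (Db - D c) + (Db - I) / (Db - D c) = 1 := by
        field_simp
        ring
      linarith
    · have : (I - D c) / (Db - D c) * D bstar + (Db - I) / (Db - D c) * D c = I := by
        field_simp
        ring
      linarith
    · exact hgc
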